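/- Let (Γ,μ) be a weighted graph satisfying (p0) and (VD), and let F∈W0 be such that PLE(F) holds. Then there is a c>0 such that for all x∈Γ and R>0, E(x,R) ≥ c·F(x,R). -/

import Mathlib

open scoped Classical BigOperators

noncomputable section

/-- A weighted graph: a countable infinite connected graph with symmetric
positive edge weights on edges. -/
structure WGraph (Γ : Type*) where
  adj : Γ → Γ → Prop
  adj_symm : ∀ x y, adj x y → adj y x
  w : Γ → Γ → ℝ
  w_symm : ∀ x y, w x y = w y x
  w_pos : ∀ x y, adj x y → 0 < w x y
  w_zero : ∀ x y, ¬ adj x y → w x y = 0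
  connected : ∀ x y, Relation.ReflTransGen adj x y
  inf : Infinite Γ
  cnt : Countable Γ

namespace WGraph

variable {Γ : Type*}

/-- n-fold adjacency: there is a path of length n. -/
def adjN (G : WGraph Γ) : ℕ → Γ → Γ → Prop
  | 0 => fun x y => x = y
  | (n+1) => fun x y => ∃ z, G.adj x z ∧ adjN G n z y

variable (G : WGraph Γ)

/-- μ(x) = Σ_{y} μ_{x,y}. -/
def vtx (x : Γ) : ℝ := ∑' y, G.w x y

/-- μ(A) for a set of vertices. -/
def setVol (A : Set Γ) : ℝ := ∑' y : A, G.vtx y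

/-- graph (shortest path) distance. -/
def dist (x y : Γ) : ℕ := sInf {n | G.adjN n x y}

/-- open metric ball B(x,r). -/
def ball (x : Γ) (r : ℝ) : Set Γ := {y | (G.dist x y : ℝ) < r}

/-- V(x,r) = μ(B(x,r)). -/
def vol (x : Γ) (r : ℝ) : ℝ := G.setVol (G.ball x r)

/-- one-step transition probability P(x,y) = μ_{xy}/μ(x). -/
def kerP (x y : Γ) : ℝ := G.w x y / G.vtx x

/-- n-step transition probability of the walk killed outside A. -/
def killedP (G : WGraph Γ) (A : Set Γ) : ℕ → Γ → Γ → ℝ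
  | 0 => fun x y => if x = y ∧ x ∈ A then 1 else 0
  | (n+1) => fun x y => if x ∈ A then ∑' z, G.kerP x z * killedP G A n z y else 0

/-- P_n(x,y). -/
def transP (n : ℕ) (x y : Γ) : ℝ := G.killedP Set.univ n x y

/-- heat kernel p_n(x,y) = P_n(x,y)/μ(y). -/
def hk (n : ℕ) (x y : Γ) : ℝ := G.transP n x y / G.vtx y

/-- p̃_n = p_n + p_{n+1}. -/
def hkt (n : ℕ) (x y : Γ) : ℝ := G.hk n x y + G.hk (n+1) x y

/-- Dirichlet heat kernel p_n^A. -/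
def hkA (A : Set Γ) (n : ℕ) (x y : Γ) : ℝ := G.killedP A n x y / G.vtx y

/-- p̃_n^A = p_n^A + p_{n+1}^A. -/
def hktA (A : Set Γ) (n : ℕ) (x y : Γ) : ℝ := G.hkA A n x y + G.hkA A (n+1) x y

/-- local Green function G^A(x,y) = Σ_k P_k^A(x,y). -/
def greenF (A : Set Γ) (x y : Γ) : ℝ := ∑' n, G.killedP A n x y

/-- local Green kernel g^A(x,y) = G^A(x,y)/μ(y). -/
def greenK (A : Set Γ) (x y : Γ) : ℝ := G.greenF A x y / G.vtx y

/-- mean exit time E_x(A) = Σ_{y∈A} G^A(x,y). -/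
def exitE (A : Set Γ) (x : Γ) : ℝ := ∑' y : A, G.greenF A x y

/-- E(x,r) = E_x(B(x,r)). -/
def meanE (x : Γ) (r : ℝ) : ℝ := G.exitE (G.ball x r) x

/-- the mean exit time as a function Γ × ℕ → ℝ. -/
def EF : Γ → ℕ → ℝ := fun x R => G.meanE x (R : ℝ)

/-- Ē(x,r) = max_{y ∈ B(x,r)} E_y(B(x,r)). -/
def maxE (x : Γ) (r : ℝ) : ℝ :=
  sSup {e | ∃ y ∈ G.ball x r, e = G.exitE (G.ball x r) y}

/-- Markov operator P. -/
def Pop (u : Γ → ℝ) (x : Γ) : ℝ := ∑' y, G.kerP x y * u y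

/-- Markov operator of the killed walk. -/
def PopB (B : Set Γ) (u : Γ → ℝ) (x : Γ) : ℝ :=
  ∑' y, if y ∈ B then G.kerP x y * u y else 0

/-- Dirichlet Laplacian Δ^B = P^B - I. -/
def lapB (B : Set Γ) (u : Γ → ℝ) (x : Γ) : ℝ := G.PopB B u x - u x

/-- Dirichlet form E(f,f). -/
def dform (f : Γ → ℝ) : ℝ :=
  (1/2) * ∑' p : Γ × Γ, G.w p.1 p.2 * (f p.1 - f p.2)^2

/-- effective resistance between disjoint sets. -/
def res (A B : Set Γ) : ℝ :=
  (sInf {e | ∃ f : Γ → ℝ, (∀ x ∈ A, f x = 1) ∧ (∀ x ∈ B, f x = 0) ∧ e = G.dform f})⁻¹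

/-- ρ(x,r,R), resistance of the annulus. -/
def resA (x : Γ) (r R : ℝ) : ℝ := G.res (G.ball x r) (G.ball x R)ᶜ

/-- v(x,r,R) = V(x,R) - V(x,r). -/
def volA (x : Γ) (r R : ℝ) : ℝ := G.vol x R - G.vol x r

/-- smallest Dirichlet eigenvalue λ(A) of -Δ^A. -/
def lam (A : Set Γ) : ℝ :=
  sInf {e | ∃ f : Γ → ℝ, f ≠ 0 ∧ (∀ x ∉ A, f x = 0) ∧
        e = G.dform f / (∑' x, (f x)^2 * G.vtx x)}

/-- Σ_{y∈A} v(y) μ(y). -/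
def wsum (A : Set Γ) (v : Γ → ℝ) : ℝ := ∑' y : A, v y * G.vtx y

/-- space-time sum Σ_{a ≤ i ≤ b} Σ_{y∈A} u_i(y) μ(y). -/
def stsum (A : Set Γ) (a b : ℝ) (u : ℕ → Γ → ℝ) : ℝ :=
  ∑' i : ℕ, if a ≤ (i:ℝ) ∧ (i:ℝ) ≤ b then G.wsum A (u i) else 0

/-! ### Conditions -/

/-- (p0): controlled weights. -/
def p0cond : Prop := ∃ p > (0:ℝ), ∀ x y, G.adj x y → p ≤ G.kerP x y

/-- (VD): volume doubling. -/
def VD : Prop := ∃ D > (0:ℝ), ∀ (x : Γ) (R : ℝ), 0 < R → G.vol x (2*R) ≤ D * G.vol x R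

/-- u is harmonic on A. -/
def harmOn (u : Γ → ℝ) (A : Set Γ) : Prop := ∀ x ∈ A, G.Pop u x = u x

/-- (H): elliptic Harnack inequality. -/
def EH : Prop := ∃ C > (0:ℝ), ∀ (x : Γ) (R : ℕ), 0 < R →
  ∀ u : Γ → ℝ, (∀ y, 0 ≤ u y) → G.harmOn u (G.ball x (2*(R:ℝ))) →
    ∀ y ∈ G.ball x (R:ℝ), ∀ z ∈ G.ball x (R:ℝ), u y ≤ C * u z

/-- (wTC): weak time comparison principle. -/
def wTC : Prop := ∃ C > (1:ℝ), ∀ (x y : Γ) (R : ℕ), 0 < R → G.dist x y < R →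
  G.meanE x (R:ℝ) ≤ C * G.meanE y (R:ℝ)

/-- (TC): time comparison principle. -/
def TC : Prop := ∃ C > (1:ℝ), ∀ (x y : Γ) (R : ℕ), 0 < R → G.dist x y < R →
  G.meanE x (2*(R:ℝ)) ≤ C * G.meanE y (R:ℝ)

/-- (ER): the Einstein relation E(x,2R) ≃ ρ(x,R,2R)v(x,R,2R). -/
def ER : Prop := ∃ C > (1:ℝ), ∀ (x : Γ) (R : ℕ), 0 < R →
  G.meanE x (2*(R:ℝ)) ≤ C * (G.resA x (R:ℝ) (2*(R:ℝ)) * G.volA x (R:ℝ) (2*(R:ℝ))) ∧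
  G.resA x (R:ℝ) (2*(R:ℝ)) * G.volA x (R:ℝ) (2*(R:ℝ)) ≤ C * G.meanE x (2*(R:ℝ))

/-- (aDρv): anti-doubling for the resistance-volume product. -/
def aDrv : Prop := ∃ c > (0:ℝ), ∃ b > (0:ℝ), ∀ (x : Γ) (r R : ℕ), 0 < r → r < R →
  c * ((R:ℝ)/(r:ℝ)) ^ b * (G.resA x (r:ℝ) (2*(r:ℝ)) * G.volA x (r:ℝ) (2*(r:ℝ)))
    ≤ G.resA x (R:ℝ) (2*(R:ℝ)) * G.volA x (R:ℝ) (2*(R:ℝ))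

/-- RLE(E): resistance lower estimate w.r.t. the mean exit time. -/
def RLE_E : Prop := ∃ c > (0:ℝ), ∀ (x : Γ) (R : ℕ), 0 < R →
  c * G.meanE x (2*(R:ℝ)) / G.vol x (2*(R:ℝ)) ≤ G.resA x (R:ℝ) (2*(R:ℝ))

/-- the two-sided regularity (w1) of a space-time scaling function,
with exponents β (upper) and β' (lower). -/
def W0reg (F : Γ → ℕ → ℝ) (β β' : ℝ) : Prop :=
  ∃ cF > (0:ℝ), ∃ CF > (0:ℝ), ∀ (x y : Γ) (R r : ℕ), 0 < r → r < R → G.dist x y < R →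
    cF * ((R:ℝ)/(r:ℝ)) ^ β' ≤ F x R / F y r ∧ F x R / F y r ≤ CF * ((R:ℝ)/(r:ℝ)) ^ β

/-- F ∈ W₀. -/
def memW0 (F : Γ → ℕ → ℝ) : Prop :=
  (∃ β > (1:ℝ), ∃ β' > (0:ℝ), G.W0reg F β β') ∧
  (∃ c > (0:ℝ), ∀ (x : Γ) (R : ℕ), c * (R:ℝ)^2 ≤ F x R) ∧
  (∀ (x : Γ) (R : ℕ), F x R + 1 ≤ F x (R+1))

/-- F ∈ W₁ (β' > 1). -/
def memW1 (F : Γ → ℕ → ℝ) : Prop :=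
  (∃ β > (1:ℝ), ∃ β' > (1:ℝ), G.W0reg F β β') ∧
  (∃ c > (0:ℝ), ∀ (x : Γ) (R : ℕ), c * (R:ℝ)^2 ≤ F x R) ∧
  (∀ (x : Γ) (R : ℕ), F x R + 1 ≤ F x (R+1))

/-- generalized inverse f(x,n) = min{R ∈ ℕ : F(x,R) ≥ n}. -/
def invF' (F : Γ → ℕ → ℝ) (x : Γ) (n : ℕ) : ℕ := sInf {R : ℕ | (n:ℝ) ≤ F x R}

/-- g(F): two-sided bound for the Green kernel on annuli. -/
def gF (F : Γ → ℕ → ℝ) : Prop :=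
  ∃ c > (0:ℝ), ∃ C > (0:ℝ), ∀ (x : Γ) (R : ℕ), 0 < R → ∀ y : Γ,
    y ∈ G.ball x (R:ℝ) → y ∉ G.ball x ((R:ℝ)/2) →
      G.greenK (G.ball x (2*(R:ℝ))) x y ≤ C * F x (2*R) / G.vol x (2*(R:ℝ)) ∧
      c * F x (2*R) / G.vol x (2*(R:ℝ)) ≤ G.greenK (G.ball x (2*(R:ℝ))) x y

/-- DUE(F): diagonal upper estimate. -/
def DUE (F : Γ → ℕ → ℝ) : Prop :=
  ∃ C > (0:ℝ), ∀ (x : Γ) (n : ℕ), 0 < n → G.hk n x x ≤ C / G.vol x (invF' F x n : ℝ)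

/-- UE(F): (sub-Gaussian) heat kernel upper estimate. -/
def UE (F : Γ → ℕ → ℝ) : Prop :=
  ∃ C > (1:ℝ), ∃ β > (1:ℝ), ∃ c > (0:ℝ), ∀ (x y : Γ) (n : ℕ), 0 < n →
    G.hk n x y ≤ C / G.vol x (invF' F x n : ℝ) *
      Real.exp (-(c * (F x (G.dist x y) / n) ^ (1/(β-1))))

/-- PLE(F): particular lower estimate for the Dirichlet heat kernel. -/
def PLE (F : Γ → ℕ → ℝ) : Prop :=
  ∃ c δ ε : ℝ, 0 < c ∧ c < 1 ∧ 0 < δ ∧ δ < 1 ∧ 0 < ε ∧ ε < 1 ∧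
    ∀ (x : Γ) (R : ℕ), 0 < R → ∀ (n : ℕ) (y : Γ),
      (n:ℝ) ≤ ε * F x R →
      (G.dist x y : ℝ) < min (n:ℝ) (δ * (invF' F x n : ℝ)) →
        c / G.vol x (invF' F x n : ℝ) ≤ G.hktA (G.ball x (R:ℝ)) n x y

/-- NDLE(F): near diagonal lower estimate. -/
def NDLE (F : Γ → ℕ → ℝ) : Prop :=
  ∃ c > (0:ℝ), ∃ δ > (0:ℝ), ∀ (x y : Γ) (n : ℕ), 0 < n →
    (G.dist x y : ℝ) < min (δ * (invF' F x n : ℝ)) (n:ℝ) →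
      c / G.vol x (invF' F x n : ℝ) ≤ G.hkt n x y

/-- LE(F): off-diagonal lower estimate. -/
def LE (F : Γ → ℕ → ℝ) : Prop :=
  ∃ C > (1:ℝ), ∃ β' > (1:ℝ), ∃ c > (0:ℝ), ∀ (x y : Γ) (n : ℕ), G.dist x y ≤ n →
    c / G.vol x (invF' F x n : ℝ) *
        Real.exp (-(C * (F x (G.dist x y) / n) ^ (1/(β'-1))))
      ≤ G.hkt n x y

/-- u is a nonnegative Dirichlet sub-solution of the heat equation
on [0,T] × B. -/
def subSolOn (B : Set Γ) (T : ℝ) (u : ℕ → Γ → ℝ) : Prop :=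
  (∀ n y, 0 ≤ u n y) ∧
  ∀ (n : ℕ) (y : Γ), y ∈ B → (n:ℝ) < T → u (n+1) y - u n y ≤ G.lapB B (u n) y

/-- u is a nonnegative Dirichlet super-solution of the heat equation
on [0,T] × B. -/
def supSolOn (B : Set Γ) (T : ℝ) (u : ℕ → Γ → ℝ) : Prop :=
  (∀ n y, 0 ≤ u n y) ∧
  ∀ (n : ℕ) (y : Γ), y ∈ B → (n:ℝ) < T → G.lapB B (u n) y ≤ u (n+1) y - u n y

/-- PMV_δ(F) with constants c1 < c2 < c3 < c4 ≤ c5: parabolic mean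
value inequality. -/
def PMVd (F : Γ → ℕ → ℝ) (δ c1 c2 c3 c4 c5 : ℝ) : Prop :=
  ∃ C > (1:ℝ), ∀ (x : Γ) (R : ℕ), 0 < R →
    ∀ u : ℕ → Γ → ℝ, G.subSolOn (G.ball x (R:ℝ)) (c5 * F x R) u →
      ∀ (n : ℕ) (y : Γ), y ∈ G.ball x (δ * R) →
        c3 * F x R ≤ (n:ℝ) → (n:ℝ) ≤ c4 * F x R →
          u n y ≤ C / ((c2 - c1) * F x R * G.vol x (δ * R)) *
            G.stsum (G.ball x (δ * R)) (c1 * F x R) (c2 * F x R) u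

/-- PMV(F) = PMV_1(F) for all admissible constants. -/
def PMV (F : Γ → ℕ → ℝ) : Prop :=
  ∀ c1 c2 c3 c4 c5 : ℝ, 0 ≤ c1 → c1 < c2 → c2 < c3 → c3 < c4 → c4 ≤ c5 →
    G.PMVd F 1 c1 c2 c3 c4 c5

/-- PSMV(F): parabolic super mean value inequality. -/
def PSMV (F : Γ → ℕ → ℝ) : Prop :=
  ∃ ε : ℝ, 0 < ε ∧ ε < 1 ∧
    ∀ c1 c2 c3 c4 c5 : ℝ, 0 < c1 → c1 < c2 → c2 < c3 → c3 < c4 → c4 ≤ c5 →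
      c4 - c1 < ε →
      ∃ δ > (0:ℝ), ∃ c > (0:ℝ), ∀ (x : Γ) (R : ℕ), 0 < R →
        ∀ u : ℕ → Γ → ℝ, G.supSolOn (G.ball x (R:ℝ)) (c5 * F x R) u →
          ∀ (k : ℕ) (y : Γ), y ∈ G.ball x (δ * R) →
            c3 * F x R ≤ (k:ℝ) → (k:ℝ) ≤ c4 * F x R →
              c / ((c2 - c1) * F x R * G.vol x (δ * R)) *
                  G.stsum (G.ball x (δ * R)) (c1 * F x R) (c2 * F x R)
                    (fun i z => u i z + u (i+1) z)
                ≤ u k y + u (k+1) y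

/-- u solves the heat equation ∂ₙu = Δu on [a,b) × B. -/
def solOn (B : Set Γ) (a b : ℝ) (u : ℕ → Γ → ℝ) : Prop :=
  (∀ n y, 0 ≤ u n y) ∧
  ∀ (n : ℕ) (y : Γ), y ∈ B → a ≤ (n:ℝ) → (n:ℝ) < b → u (n+1) y = G.Pop (u n) y

/-- PH(F): parabolic Harnack inequality. -/
def PH (F : Γ → ℕ → ℝ) : Prop :=
  ∃ C > (0:ℝ), ∀ (x : Γ) (R k : ℕ), 0 < R →
    ∀ u : ℕ → Γ → ℝ, G.solOn (G.ball x (2*(R:ℝ))) (k:ℝ) ((k:ℝ) + F x R) u →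
      ∀ (nm np : ℕ) (xm xp : Γ), xm ∈ G.ball x (R:ℝ) → xp ∈ G.ball x (R:ℝ) →
        (k:ℝ) + F x R / 4 ≤ (nm:ℝ) → (nm:ℝ) ≤ (k:ℝ) + F x R / 2 →
        (k:ℝ) + 3 * F x R / 4 ≤ (np:ℝ) → (np:ℝ) < (k:ℝ) + F x R →
        (G.dist xm xp : ℝ) ≤ (np:ℝ) - (nm:ℝ) →
          u nm xm ≤ C * (u np xp + u (np+1) xp)

/-- (MV): elliptic mean value inequality. -/
def MV : Prop := ∃ C > (0:ℝ), ∀ (x : Γ) (R : ℕ), 0 < R →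
  ∀ u : Γ → ℝ, (∀ y, 0 ≤ u y) → G.harmOn u (G.ball x (R:ℝ)) →
    u x ≤ C / G.vol x (R:ℝ) * G.wsum (G.ball x (R:ℝ)) u

/-- the set of integers k eligible in the definition of the local
sub-Gaussian upper exponent k_x(n,R). -/
def kSet (F : Γ → ℕ → ℝ) (q : ℝ) (x : Γ) (n R : ℕ) : Set ℕ :=
  {k | 1 ≤ k ∧ ∀ y : Γ, G.dist x y < R → (n:ℝ)/(k:ℝ) ≤ q * F y (R / k)}

/-- k = k_x(n,R): the maximal eligible integer, or 1 if there is none. -/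
def isKexp (F : Γ → ℕ → ℝ) (q : ℝ) (x : Γ) (n R k : ℕ) : Prop :=
  (k ∈ G.kSet F q x n R ∧ ∀ j ∈ G.kSet F q x n R, j ≤ k) ∨
  (G.kSet F q x n R = ∅ ∧ k = 1)

/-- the set of integers l eligible in the definition of l_x(n,R). -/
def lSet' (F : Γ → ℕ → ℝ) (Cl : ℝ) (x : Γ) (n R : ℕ) : Set ℕ :=
  {l | 1 ≤ l ∧ l ≤ n ∧ Cl * F x ((R + l - 1) / l) ≤ (n:ℝ)/(l:ℝ)}

/-- l = l_x(n,R): the minimal eligible integer, or n if there is none. -/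
def isLexp (F : Γ → ℕ → ℝ) (Cl : ℝ) (x : Γ) (n R l : ℕ) : Prop :=
  (l ∈ lSet' F Cl x n R ∧ ∀ j ∈ lSet' F Cl x n R, l ≤ j) ∨
  (lSet' F Cl x n R = ∅ ∧ l = n)

end WGraph

namespace WGraph

variable {Γ : Type*} (G : WGraph Γ)

lemma w_nonneg (x y : Γ) : 0 ≤ G.w x y := by
  by_cases h : G.adj x y
  · exact (G.w_pos x y h).le
  · exact (G.w_zero x y h).ge

lemma vtx_nonneg (x : Γ) : 0 ≤ G.vtx x := tsum_nonneg (fun y => G.w_nonneg x y)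

lemma exists_adj (x : Γ) : ∃ y, G.adj x y := by
  have : ∃ y : Γ, y ≠ x := by
    haveI := G.inf
    exact exists_ne x
  obtain ⟨y, hy⟩ := this
  have h := G.connected x y
  induction h with
  | refl => exact absurd rfl hy
  | @tail b c _ e ih =>
    by_cases hbx : b = x
    · exact ⟨c, hbx ▸ e⟩
    · exact ih hbx

section P0

variable {G} {p0 : ℝ} (hp1 : 0 < p0) (hker : ∀ x y, G.adj x y → p0 ≤ G.kerP x y)

include hp1 hker

lemma vtx_pos (x : Γ) : 0 < G.vtx x := by
  rcases lt_or_eq_of_le (G.vtx_nonneg x) with h | h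
  · exact h
  · exfalso
    obtain ⟨y, hy⟩ := G.exists_adj x
    have := hker x y hy
    rw [WGraph.kerP, ← h, div_zero] at this
    linarith

lemma summable_w (x : Γ) : Summable (G.w x) := by
  by_contra h
  have : G.vtx x = 0 := tsum_eq_zero_of_not_summable h
  exact absurd this (vtx_pos hp1 hker x).ne'

lemma kerP_nonneg (x y : Γ) : 0 ≤ G.kerP x y :=
  div_nonneg (G.w_nonneg x y) (G.vtx_nonneg x)

lemma kerP_eq_zero (x y : Γ) (h : ¬ G.adj x y) : G.kerP x y = 0 := by
  rw [WGraph.kerP, G.w_zero x y h, zero_div]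

lemma summable_kerP (x : Γ) : Summable (G.kerP x) :=
  (summable_w hp1 hker x).div_const _

lemma tsum_kerP (x : Γ) : ∑' y, G.kerP x y = 1 := by
  simp only [WGraph.kerP]
  rw [tsum_div_const]
  exact div_self (vtx_pos hp1 hker x).ne'

/-- the neighbor set is finite -/
lemma nbr_finite (x : Γ) : {y | G.adj x y}.Finite := by
  have hs := summable_kerP hp1 hker x
  have h2 := hs.tendsto_cofinite_zero
  have h3 : ∀ᶠ y in Filter.cofinite, G.kerP x y < p0 :=
    h2.eventually (Filter.Tendsto.eventually_lt_const hp1 Filter.tendsto_id)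
  have h4 : {y | ¬ G.kerP x y < p0}.Finite := h3
  exact h4.subset (fun y hy => not_lt.mpr (hker x y hy))

end P0

lemma adjN_trans {G : WGraph Γ} {a b : ℕ} {x z y : Γ} (h1 : G.adjN a x z) (h2 : G.adjN b z y) :
    G.adjN (a + b) x y := by
  induction a generalizing x with
  | zero =>
    have : x = z := h1
    subst this; simpa using h2
  | succ n ih =>
    obtain ⟨u, hu, h⟩ := h1
    rw [show n + 1 + b = (n + b) + 1 by omega]
    exact ⟨u, hu, ih h⟩

lemma adjN_split {G : WGraph Γ} {a b : ℕ} {x y : Γ} (h : G.adjN (a + b) x y) :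
    ∃ z, G.adjN a x z ∧ G.adjN b z y := by
  induction a generalizing x with
  | zero => exact ⟨x, rfl, by simpa using h⟩
  | succ n ih =>
    have h' : G.adjN (n + b + 1) x y := by rwa [show n + 1 + b = n + b + 1 by omega] at h
    obtain ⟨u, hu, h2⟩ := h'
    obtain ⟨z, hz1, hz2⟩ := ih h2
    exact ⟨z, ⟨u, hu, hz1⟩, hz2⟩

lemma distSet_nonempty (G : WGraph Γ) (x y : Γ) : {n | G.adjN n x y}.Nonempty := by
  have h := G.connected x y
  induction h with
  | refl => exact ⟨0, rfl⟩
  | tail _ e ih =>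
    obtain ⟨n, hn⟩ := ih
    rename_i c hbc
    exact ⟨n + 1, adjN_trans hn ⟨_, e, rfl⟩⟩

lemma adjN_dist (G : WGraph Γ) (x y : Γ) : G.adjN (G.dist x y) x y :=
  Nat.sInf_mem (G.distSet_nonempty x y)

lemma dist_le {G : WGraph Γ} {n : ℕ} {x y : Γ} (h : G.adjN n x y) : G.dist x y ≤ n :=
  Nat.sInf_le h

@[simp] lemma dist_self (G : WGraph Γ) (x : Γ) : G.dist x x = 0 :=
  Nat.le_zero.mp (dist_le (by rfl))

lemma dist_triangle (G : WGraph Γ) (x z y : Γ) :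
    G.dist x y ≤ G.dist x z + G.dist z y :=
  dist_le (adjN_trans (G.adjN_dist x z) (G.adjN_dist z y))

lemma dist_eq_zero_iff {G : WGraph Γ} {x y : Γ} : G.dist x y = 0 ↔ x = y := by
  constructor
  · intro h
    have := G.adjN_dist x y
    rw [h] at this
    exact this
  · rintro rfl; exact G.dist_self x

end WGraph
namespace WGraph

variable {Γ : Type*} {G : WGraph Γ} {p0 : ℝ}

section Fin

variable (hp1 : 0 < p0) (hker : ∀ x y, G.adj x y → p0 ≤ G.kerP x y)
include hp1 hker

lemma distLE_finite (n : ℕ) : ∀ x : Γ, {y | G.dist x y ≤ n}.Finite := by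
  induction n with
  | zero =>
    intro x
    have : {y | G.dist x y ≤ 0} ⊆ {x} := by
      intro y hy
      have : G.dist x y = 0 := Nat.le_zero.mp hy
      exact (dist_eq_zero_iff.mp this).symm
    exact (Set.finite_singleton x).subset this
  | succ n ih =>
    intro x
    have hsub : {y | G.dist x y ≤ n + 1} ⊆
        {y | G.dist x y ≤ n} ∪ ⋃ z ∈ {z | G.adj x z}, {y | G.dist z y ≤ n} := by
      intro y hy
      rcases Nat.lt_or_ge (G.dist x y) (n+1) with h | h
      · exact Or.inl (Nat.lt_succ_iff.mp h)
      · have hd : G.dist x y = n + 1 := le_antisymm hy h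
        have h2 : G.adjN (n+1) x y := hd ▸ G.adjN_dist x y
        obtain ⟨z, hz, hzy⟩ := h2
        refine Or.inr (Set.mem_biUnion hz (dist_le hzy))
    exact ((ih x).union ((nbr_finite hp1 hker x).biUnion (fun z _ => ih z))).subset hsub

lemma ball_finite (x : Γ) (r : ℝ) : (G.ball x r).Finite := by
  refine (distLE_finite hp1 hker ⌈r⌉₊ x).subset ?_
  intro y hy
  have h1 : (G.dist x y : ℝ) < r := hy
  have h2 : (G.dist x y : ℝ) ≤ ⌈r⌉₊ := h1.le.trans (Nat.le_ceil r)
  exact_mod_cast h2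

lemma exists_dist_ge (x : Γ) (m : ℕ) : ∃ z, m ≤ G.dist x z := by
  by_contra h
  push_neg at h
  have hfin : (Set.univ : Set Γ).Finite := by
    refine (distLE_finite hp1 hker m x).subset ?_
    intro y _
    exact (h y).le
  haveI := G.inf
  exact Set.infinite_univ (α := Γ) hfin

lemma exists_dist_eq (x : Γ) (m : ℕ) : ∃ z, G.dist x z = m := by
  obtain ⟨w, hw⟩ := exists_dist_ge hp1 hker x m
  set d := G.dist x w with hd
  have h1 : G.adjN (m + (d - m)) x w := by
    rw [Nat.add_sub_cancel' hw]; exact G.adjN_dist x w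
  obtain ⟨z, hz1, hz2⟩ := adjN_split h1
  refine ⟨z, le_antisymm (dist_le hz1) ?_⟩
  have h3 : d ≤ G.dist x z + (d - m) :=
    le_trans (G.dist_triangle x z w) (Nat.add_le_add_left (dist_le hz2) _)
  omega

end Fin

end WGraph
namespace WGraph

variable {Γ : Type*} {G : WGraph Γ} {p0 : ℝ}

/-- survival-type sum over a finite vertex set -/
def sfun (G : WGraph Γ) (A : Set Γ) (AF : Finset Γ) (n : ℕ) (x : Γ) : ℝ :=
  ∑ y ∈ AF, G.killedP A n x y

section Killed

variable (hp1 : 0 < p0) (hker : ∀ x y, G.adj x y → p0 ≤ G.kerP x y)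
include hp1 hker

lemma kerP_le_one (x y : Γ) : G.kerP x y ≤ 1 := by
  have h1 : G.w x y ≤ G.vtx x :=
    Summable.le_tsum (summable_w hp1 hker x) y (fun z _ => G.w_nonneg x z)
  rw [WGraph.kerP]
  exact div_le_one_of_le₀ h1 (G.vtx_nonneg x)

lemma p0_le_one : p0 ≤ 1 := by
  haveI := G.inf
  haveI : Nonempty Γ := inferInstance
  obtain ⟨y, hy⟩ := G.exists_adj (Classical.arbitrary _)
  exact (hker _ _ hy).trans (kerP_le_one hp1 hker _ _)

omit hp1 hker in
lemma killedP_zero_eq (A : Set Γ) (x y : Γ) :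
    G.killedP A 0 x y = if x = y ∧ x ∈ A then 1 else 0 := rfl

omit hp1 hker in
lemma killedP_succ_eq (A : Set Γ) (n : ℕ) (x y : Γ) :
    G.killedP A (n+1) x y =
      if x ∈ A then ∑' z, G.kerP x z * G.killedP A n z y else 0 := rfl

lemma killedP_nonneg (A : Set Γ) (n : ℕ) (x y : Γ) : 0 ≤ G.killedP A n x y := by
  induction n generalizing x with
  | zero =>
    rw [killedP_zero_eq]
    split <;> norm_num
  | succ n ih =>
    rw [killedP_succ_eq]
    split
    · exact tsum_nonneg fun z => mul_nonneg (kerP_nonneg hp1 hker x z) (ih z)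
    · exact le_refl 0

lemma killedP_far (A : Set Γ) (n : ℕ) (x y : Γ) (h : n < G.dist x y) :
    G.killedP A n x y = 0 := by
  induction n generalizing x with
  | zero =>
    rw [killedP_zero_eq]
    have : x ≠ y := fun hxy => by simp [hxy] at h
    simp [this]
  | succ n ih =>
    rw [killedP_succ_eq]
    split
    · have hz0 : ∀ z, G.kerP x z * G.killedP A n z y = 0 := by
        intro z
        by_cases hz : G.adj x z
        · have h1 : G.dist x z ≤ 1 := dist_le ⟨z, hz, rfl⟩
          have h2 : n < G.dist z y := by
            have := G.dist_triangle x z y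
            omega
          rw [ih z h2, mul_zero]
        · rw [kerP_eq_zero hp1 hker x z hz, zero_mul]
      rw [tsum_congr hz0, tsum_zero]
    · rfl

/-- neighbor finset -/
lemma killedP_rec (A : Set Γ) (n : ℕ) (x y : Γ) (hx : x ∈ A) :
    G.killedP A (n+1) x y =
      ∑ z ∈ (nbr_finite hp1 hker x).toFinset, G.kerP x z * G.killedP A n z y := by
  rw [killedP_succ_eq, if_pos hx]
  refine tsum_eq_sum ?_
  intro z hz
  rw [kerP_eq_zero hp1 hker x z (by simpa using hz), zero_mul]

lemma killedP_rec_out (A : Set Γ) (n : ℕ) (x y : Γ) (hx : x ∉ A) :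
    G.killedP A (n+1) x y = 0 := by
  rw [killedP_succ_eq, if_neg hx]

lemma sum_nbr_kerP (x : Γ) :
    ∑ z ∈ (nbr_finite hp1 hker x).toFinset, G.kerP x z = 1 := by
  rw [← tsum_kerP hp1 hker x]
  refine (tsum_eq_sum ?_).symm
  intro z hz
  exact kerP_eq_zero hp1 hker x z (by simpa using hz)

end Killed

end WGraph
namespace WGraph

variable {Γ : Type*} {G : WGraph Γ} {p0 : ℝ}

section SFun

variable (hp1 : 0 < p0) (hker : ∀ x y, G.adj x y → p0 ≤ G.kerP x y)
  {A : Set Γ} {AF : Finset Γ} (hAF : ∀ y, y ∈ AF ↔ y ∈ A)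
include hp1 hker hAF

omit hp1 hker hAF in
lemma sfun_nonneg' (hp1 : 0 < p0) (hker : ∀ x y, G.adj x y → p0 ≤ G.kerP x y)
    (n : ℕ) (x : Γ) : 0 ≤ G.sfun A AF n x :=
  Finset.sum_nonneg fun y _ => killedP_nonneg hp1 hker A n x y

lemma sfun_rec (n : ℕ) (x : Γ) :
    G.sfun A AF (n+1) x = if x ∈ A then
      ∑ z ∈ (nbr_finite hp1 hker x).toFinset, G.kerP x z * G.sfun A AF n z else 0 := by
  by_cases hx : x ∈ A
  · rw [if_pos hx]
    rw [WGraph.sfun]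
    have : ∀ y ∈ AF, G.killedP A (n+1) x y =
        ∑ z ∈ (nbr_finite hp1 hker x).toFinset, G.kerP x z * G.killedP A n z y :=
      fun y _ => killedP_rec hp1 hker A n x y hx
    rw [Finset.sum_congr rfl this, Finset.sum_comm]
    refine Finset.sum_congr rfl ?_
    intro z _
    rw [WGraph.sfun, Finset.mul_sum]
  · rw [if_neg hx, WGraph.sfun]
    refine Finset.sum_eq_zero fun y _ => killedP_rec_out hp1 hker A n x y hx

lemma sfun_zero_mem (x : Γ) (hx : x ∈ A) : G.sfun A AF 0 x = 1 := by
  rw [WGraph.sfun]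
  have hxAF : x ∈ AF := (hAF x).mpr hx
  rw [Finset.sum_eq_single x]
  · simp [killedP_zero_eq, hx]
  · intro y _ hy
    rw [killedP_zero_eq, if_neg]
    rintro ⟨h, -⟩; exact hy h.symm
  · intro h; exact absurd hxAF h

lemma sfun_zero_le_one (x : Γ) : G.sfun A AF 0 x ≤ 1 := by
  by_cases hx : x ∈ A
  · exact (sfun_zero_mem hp1 hker hAF x hx).le
  · rw [WGraph.sfun]
    have : ∀ y ∈ AF, G.killedP A 0 x y = 0 := by
      intro y _
      rw [killedP_zero_eq, if_neg]
      rintro ⟨-, h⟩; exact hx h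
    rw [Finset.sum_eq_zero this]; norm_num

lemma sfun_not_mem (n : ℕ) (x : Γ) (hx : x ∉ A) : G.sfun A AF n x = 0 := by
  cases n with
  | zero =>
    refine Finset.sum_eq_zero fun y _ => ?_
    rw [killedP_zero_eq, if_neg]
    rintro ⟨-, h⟩; exact hx h
  | succ n =>
    rw [sfun_rec hp1 hker hAF, if_neg hx]

lemma sfun_le_one (n : ℕ) (x : Γ) : G.sfun A AF n x ≤ 1 := by
  induction n generalizing x with
  | zero => exact sfun_zero_le_one hp1 hker hAF x
  | succ n ih =>
    rw [sfun_rec hp1 hker hAF]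
    split
    · calc ∑ z ∈ (nbr_finite hp1 hker x).toFinset, G.kerP x z * G.sfun A AF n z
          ≤ ∑ z ∈ (nbr_finite hp1 hker x).toFinset, G.kerP x z := by
            refine Finset.sum_le_sum fun z _ => ?_
            calc G.kerP x z * G.sfun A AF n z ≤ G.kerP x z * 1 :=
              mul_le_mul_of_nonneg_left (ih z) (kerP_nonneg hp1 hker x z)
            _ = G.kerP x z := mul_one _
      _ = 1 := sum_nbr_kerP hp1 hker x
    · norm_num

lemma sfun_succ_le (n : ℕ) (x : Γ) : G.sfun A AF (n+1) x ≤ G.sfun A AF n x := by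
  induction n generalizing x with
  | zero =>
    by_cases hx : x ∈ A
    · rw [sfun_zero_mem hp1 hker hAF x hx]
      exact sfun_le_one hp1 hker hAF 1 x
    · rw [sfun_not_mem hp1 hker hAF 1 x hx, sfun_not_mem hp1 hker hAF 0 x hx]
  | succ n ih =>
    rw [sfun_rec hp1 hker hAF, sfun_rec hp1 hker hAF]
    split
    · refine Finset.sum_le_sum fun z _ => ?_
      exact mul_le_mul_of_nonneg_left (ih z) (kerP_nonneg hp1 hker x z)
    · exact le_refl 0

lemma sfun_anti {m n : ℕ} (h : m ≤ n) (x : Γ) : G.sfun A AF n x ≤ G.sfun A AF m x := by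
  induction n with
  | zero => rw [Nat.le_zero.mp h]
  | succ n ih =>
    rcases Nat.lt_or_ge m (n+1) with h' | h'
    · exact le_trans (sfun_succ_le hp1 hker hAF n x) (ih (Nat.lt_succ_iff.mp h'))
    · rw [le_antisymm h h']

lemma killedP_le_sfun (n : ℕ) (x y : Γ) (hy : y ∈ AF) :
    G.killedP A n x y ≤ G.sfun A AF n x :=
  Finset.single_le_sum (fun z _ => killedP_nonneg hp1 hker A n x z) hy

/-- exit path estimate -/
lemma sfun_exit (k : ℕ) (y : Γ) (h : ∃ z, G.adjN k y z ∧ z ∉ A) :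
    G.sfun A AF k y ≤ 1 - p0 ^ k := by
  induction k generalizing y with
  | zero =>
    obtain ⟨z, hz1, hz2⟩ := h
    have : y = z := hz1
    subst this
    rw [sfun_not_mem hp1 hker hAF 0 y hz2]
    norm_num
  | succ k ih =>
    by_cases hy : y ∈ A
    · obtain ⟨z, hz1, hz2⟩ := h
      obtain ⟨z1, hz1a, hz1b⟩ := hz1
      rw [sfun_rec hp1 hker hAF, if_pos hy]
      have hz1mem : z1 ∈ (nbr_finite hp1 hker y).toFinset := by simpa using hz1a
      rw [← Finset.add_sum_erase _ _ hz1mem]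
      have h1 : G.kerP y z1 * G.sfun A AF k z1 ≤ G.kerP y z1 * (1 - p0^k) :=
        mul_le_mul_of_nonneg_left (ih z1 ⟨z, hz1b, hz2⟩) (kerP_nonneg hp1 hker y z1)
      have h2 : ∑ z' ∈ ((nbr_finite hp1 hker y).toFinset.erase z1), G.kerP y z' * G.sfun A AF k z'
          ≤ ∑ z' ∈ ((nbr_finite hp1 hker y).toFinset.erase z1), G.kerP y z' := by
        refine Finset.sum_le_sum fun z' _ => ?_
        calc G.kerP y z' * G.sfun A AF k z' ≤ G.kerP y z' * 1 :=
          mul_le_mul_of_nonneg_left (sfun_le_one hp1 hker hAF k z') (kerP_nonneg hp1 hker y z')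
        _ = G.kerP y z' := mul_one _
      have h3 : ∑ z' ∈ ((nbr_finite hp1 hker y).toFinset.erase z1), G.kerP y z'
          = 1 - G.kerP y z1 := by
        have := sum_nbr_kerP hp1 hker y
        rw [← Finset.add_sum_erase _ _ hz1mem] at this
        linarith
      have h4 : p0 ≤ G.kerP y z1 := hker y z1 hz1a
      have h5 : p0 ^ k ≤ 1 := pow_le_one₀ hp1.le (p0_le_one hp1 hker)
      have h6 : (0:ℝ) ≤ p0 ^ k := pow_nonneg hp1.le k
      have h7 : G.kerP y z1 * p0^k ≥ p0 * p0^k := by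
        exact mul_le_mul_of_nonneg_right h4 h6
      have h8 : G.kerP y z1 ≤ 1 := kerP_le_one hp1 hker y z1
      calc G.kerP y z1 * G.sfun A AF k z1
            + ∑ z' ∈ ((nbr_finite hp1 hker y).toFinset.erase z1), G.kerP y z' * G.sfun A AF k z'
          ≤ G.kerP y z1 * (1 - p0^k) + (1 - G.kerP y z1) := by rw [← h3]; exact add_le_add h1 h2
        _ = 1 - G.kerP y z1 * p0^k := by ring
        _ ≤ 1 - p0 * p0^k := by linarith
        _ = 1 - p0 ^ (k+1) := by ring
    · rw [sfun_not_mem hp1 hker hAF _ y hy]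
      have h5 : p0 ^ (k+1) ≤ 1 := pow_le_one₀ hp1.le (p0_le_one hp1 hker)
      linarith

end SFun

end WGraph
lemma nat_div_cast_ge {n L : ℕ} (hL : 0 < L) : (n:ℝ)/L - 1 ≤ ((n / L : ℕ) : ℝ) := by
  have h1 : n < L * (n / L) + L := by
    have h := Nat.div_add_mod n L
    have h2 := Nat.mod_lt n hL
    omega
  have h2 : (n:ℝ) < L * ((n/L : ℕ):ℝ) + L := by exact_mod_cast h1
  have hL' : (0:ℝ) < L := by exact_mod_cast hL
  rw [div_sub_one hL'.ne', div_le_iff₀ hL']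
  nlinarith

lemma summable_pow_div {θ : ℝ} (h0 : 0 < θ) (h1 : θ < 1) {L : ℕ} (hL : 0 < L)
    {g : ℕ → ℝ} (hg0 : ∀ n, 0 ≤ g n) (hgb : ∀ n, g n ≤ θ ^ (n / L)) : Summable g := by
  set ρ := θ ^ ((1:ℝ)/L) with hρ
  have hL' : (0:ℝ) < L := by exact_mod_cast hL
  have hρ0 : 0 < ρ := Real.rpow_pos_of_pos h0 _
  have hρ1 : ρ < 1 := Real.rpow_lt_one h0.le h1 (by positivity)
  refine Summable.of_nonneg_of_le hg0 (fun n => (hgb n).trans ?_)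
    ((summable_geometric_of_lt_one hρ0.le hρ1).mul_left θ⁻¹)
  have e1 : θ ^ (n / L) = θ ^ (((n / L : ℕ)):ℝ) := (Real.rpow_natCast θ _).symm
  have e2 : θ ^ (((n / L : ℕ)):ℝ) ≤ θ ^ ((n:ℝ)/L - 1) :=
    Real.rpow_le_rpow_of_exponent_ge h0 h1.le (nat_div_cast_ge hL)
  have e3 : θ ^ ((n:ℝ)/L - 1) = θ⁻¹ * ρ ^ n := by
    rw [show (n:ℝ)/L - 1 = (-1) + (1/L)*(n:ℝ) by ring, Real.rpow_add h0,
      Real.rpow_neg_one, Real.rpow_mul h0.le, Real.rpow_natCast]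
  rw [e1] at *
  rw [e3] at e2
  exact e2

namespace WGraph

variable {Γ : Type*} {G : WGraph Γ} {p0 : ℝ}

section Decay

variable (hp1 : 0 < p0) (hker : ∀ x y, G.adj x y → p0 ≤ G.kerP x y)
  {A : Set Γ} {AF : Finset Γ} (hAF : ∀ y, y ∈ AF ↔ y ∈ A)
  {L : ℕ} (hL : 0 < L) (hexit : ∀ y ∈ A, ∃ z, G.adjN L y z ∧ z ∉ A)
include hp1 hker hAF hL hexit

lemma theta_nonneg : 0 ≤ 1 - p0 ^ L := by
  have h : p0 ^ L ≤ 1 := pow_le_one₀ hp1.le (p0_le_one hp1 hker (G := G))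
  linarith

lemma sfun_L_le (y : Γ) : G.sfun A AF L y ≤ 1 - p0 ^ L := by
  by_cases hy : y ∈ A
  · exact sfun_exit hp1 hker hAF L y (hexit y hy)
  · rw [sfun_not_mem hp1 hker hAF L y hy]
    exact theta_nonneg hp1 hker hAF hL hexit (G := G)

lemma sfun_decay (n : ℕ) (x : Γ) :
    G.sfun A AF (n + L) x ≤ (1 - p0 ^ L) * G.sfun A AF n x := by
  induction n generalizing x with
  | zero =>
    by_cases hx : x ∈ A
    · rw [sfun_zero_mem hp1 hker hAF x hx, mul_one, zero_add]
      exact sfun_L_le hp1 hker hAF hL hexit x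
    · rw [sfun_not_mem hp1 hker hAF _ x hx, sfun_not_mem hp1 hker hAF 0 x hx, mul_zero]
  | succ n ih =>
    have e : n + 1 + L = (n + L) + 1 := by omega
    rw [e, sfun_rec hp1 hker hAF, sfun_rec hp1 hker hAF]
    split
    · rw [Finset.mul_sum]
      refine Finset.sum_le_sum fun z _ => ?_
      calc G.kerP x z * G.sfun A AF (n+L) z ≤ G.kerP x z * ((1-p0^L) * G.sfun A AF n z) :=
        mul_le_mul_of_nonneg_left (ih z) (kerP_nonneg hp1 hker x z)
      _ = (1-p0^L) * (G.kerP x z * G.sfun A AF n z) := by ring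
    · rw [mul_zero]

lemma sfun_geo (k : ℕ) (x : Γ) : G.sfun A AF (k * L) x ≤ (1 - p0 ^ L) ^ k := by
  induction k generalizing x with
  | zero =>
    simpa using sfun_zero_le_one hp1 hker hAF x
  | succ k ih =>
    have e : (k+1) * L = k * L + L := by ring
    rw [e]
    calc G.sfun A AF (k*L + L) x ≤ (1 - p0^L) * G.sfun A AF (k*L) x :=
        sfun_decay hp1 hker hAF hL hexit _ x
    _ ≤ (1 - p0^L) * (1-p0^L)^k :=
        mul_le_mul_of_nonneg_left (ih x) (theta_nonneg hp1 hker hAF hL hexit (G := G))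
    _ = (1-p0^L)^(k+1) := by ring

lemma sfun_pow_bound (n : ℕ) (x : Γ) : G.sfun A AF n x ≤ (1 - p0 ^ L) ^ (n / L) := by
  calc G.sfun A AF n x ≤ G.sfun A AF ((n/L) * L) x :=
      sfun_anti hp1 hker hAF (Nat.div_mul_le_self n L) x
  _ ≤ (1 - p0^L)^(n/L) := sfun_geo hp1 hker hAF hL hexit _ x

lemma summable_killedP (hp2 : p0 ≤ 1/2) (x y : Γ) (hy : y ∈ AF) :
    Summable (fun n => G.killedP A n x y) := by
  have hθ0 : 0 < 1 - p0 ^ L := by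
    have h1 : p0 ^ L ≤ (1/2 : ℝ) ^ L := pow_le_pow_left₀ hp1.le hp2 L
    have h2 : (1/2:ℝ)^L ≤ (1/2)^1 := pow_le_pow_of_le_one (by norm_num) (by norm_num) hL
    norm_num at h2
    linarith
  have hθ1 : 1 - p0 ^ L < 1 := by
    have : 0 < p0 ^ L := pow_pos hp1 L
    linarith
  refine summable_pow_div hθ0 hθ1 hL (fun n => killedP_nonneg hp1 hker A n x y) (fun n => ?_)
  exact (killedP_le_sfun hp1 hker hAF n x y hy).trans
    (sfun_pow_bound hp1 hker hAF hL hexit n x)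

lemma greenF_ge_partial (hp2 : p0 ≤ 1/2) (x y : Γ) (hy : y ∈ AF) (N : ℕ) :
    ∑ n ∈ Finset.range N, G.killedP A n x y ≤ G.greenF A x y :=
  Summable.sum_le_tsum _ (fun n _ => killedP_nonneg hp1 hker A n x y)
    (summable_killedP hp1 hker hAF hL hexit hp2 x y hy)

end Decay

end WGraph
namespace WGraph

variable {Γ : Type*} {G : WGraph Γ} {p0 : ℝ}

lemma adjN_symm {n : ℕ} {x y : Γ} (h : G.adjN n x y) : G.adjN n y x := by
  induction n generalizing x y with
  | zero => exact (h : x = y).symm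
  | succ n ih =>
    obtain ⟨z, hz, h2⟩ := h
    have h3 : G.adjN n y z := ih h2
    have h4 : G.adjN 1 z x := ⟨x, G.adj_symm x z hz, rfl⟩
    simpa using adjN_trans h3 h4

lemma dist_symm (G : WGraph Γ) (x y : Γ) : G.dist x y = G.dist y x :=
  le_antisymm (dist_le (adjN_symm (G.adjN_dist y x))) (dist_le (adjN_symm (G.adjN_dist x y)))

section Vol

variable (hp1 : 0 < p0) (hker : ∀ x y, G.adj x y → p0 ≤ G.kerP x y)
include hp1 hker

lemma ball_exit (x0 : Γ) (R : ℕ) (hR : 0 < R) (y : Γ) (hy : y ∈ G.ball x0 (R:ℝ)) :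
    ∃ z, G.adjN (2*R) y z ∧ z ∉ G.ball x0 (R:ℝ) := by
  have hd : G.dist x0 y < R := by
    have h := (show (G.dist x0 y : ℝ) < R from hy); exact_mod_cast h
  obtain ⟨z, hz⟩ := exists_dist_eq hp1 hker y (2*R)
  refine ⟨z, hz ▸ G.adjN_dist y z, fun hmem => ?_⟩
  have hd2 : G.dist x0 z < R := by
    have h := (show (G.dist x0 z : ℝ) < R from hmem); exact_mod_cast h
  have htri := G.dist_triangle y x0 z
  rw [G.dist_symm y x0] at htri
  omega

omit hp1 hker in
lemma setVol_eq_sum {A : Set Γ} (hA : A.Finite) :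
    G.setVol A = ∑ y ∈ hA.toFinset, G.vtx y := by
  rw [WGraph.setVol, tsum_subtype A G.vtx]
  rw [tsum_eq_sum (s := hA.toFinset)]
  · refine Finset.sum_congr rfl fun y hy => ?_
    rw [Set.indicator_of_mem (by simpa using hy)]
  · intro y hy
    rw [Set.indicator_of_notMem (by simpa using hy)]

omit hp1 hker in
lemma setVol_mono {A B : Set Γ} (hB : B.Finite) (hAB : A ⊆ B) :
    G.setVol A ≤ G.setVol B := by
  have hA : A.Finite := hB.subset hAB
  rw [setVol_eq_sum hA, setVol_eq_sum hB]
  refine Finset.sum_le_sum_of_subset_of_nonneg ?_ (fun y _ _ => G.vtx_nonneg y)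
  intro y hy
  simp only [Set.Finite.mem_toFinset] at *
  exact hAB hy

lemma vol_mono (x : Γ) {r r' : ℝ} (hrr : r ≤ r') : G.vol x r ≤ G.vol x r' := by
  refine setVol_mono (ball_finite hp1 hker x r') ?_
  intro y hy
  exact lt_of_lt_of_le hy hrr

lemma vol_pos (x : Γ) {r : ℝ} (hr : 0 < r) : 0 < G.vol x r := by
  have hx : x ∈ G.ball x r := by
    show (G.dist x x : ℝ) < r
    simpa using hr
  have hfin := ball_finite hp1 hker x r
  rw [WGraph.vol, setVol_eq_sum hfin]
  have h1 : G.vtx x ≤ ∑ y ∈ hfin.toFinset, G.vtx y :=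
    Finset.single_le_sum (fun y _ => G.vtx_nonneg y) (by simpa using hx)
  exact lt_of_lt_of_le (vtx_pos hp1 hker x) h1

omit hp1 hker in
lemma ball_one (x : Γ) : G.ball x (1:ℝ) = {x} := by
  ext y
  constructor
  · intro hy
    have h1 : G.dist x y < 1 := by
      have h := (show (G.dist x y : ℝ) < 1 from hy); exact_mod_cast h
    have h2 : G.dist x y = 0 := by omega
    exact (dist_eq_zero_iff.mp h2).symm
  · intro hy
    have h2 : y = x := hy
    subst h2
    show (G.dist y y : ℝ) < 1
    simp

omit hp1 hker in
lemma vol_one (x : Γ) : G.vol x (1:ℝ) = G.vtx x := by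
  rw [WGraph.vol, ball_one]
  rw [WGraph.setVol, tsum_singleton]

section VD
variable {D : ℝ} (hD : ∀ (x : Γ) (R : ℝ), 0 < R → G.vol x (2*R) ≤ D * G.vol x R)
include hD

lemma D_ge_one (hDex : ∃ x : Γ, True) : 1 ≤ D := by
  obtain ⟨x, -⟩ := hDex
  have h1 := hD x 1 one_pos
  have h2 : G.vol x 1 ≤ G.vol x (2*1) := vol_mono hp1 hker x (by norm_num)
  have h3 : 0 < G.vol x 1 := vol_pos hp1 hker x one_pos
  nlinarith

lemma vol_doubling_iter (x : Γ) {r : ℝ} (hr : 0 < r) (k : ℕ) :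
    G.vol x (2^k * r) ≤ D^k * G.vol x r := by
  have hD1 : 1 ≤ D := D_ge_one hp1 hker hD ⟨x, trivial⟩
  induction k with
  | zero => simp
  | succ k ih =>
    have h1 : G.vol x (2^(k+1) * r) = G.vol x (2 * (2^k * r)) := by ring_nf
    rw [h1]
    calc G.vol x (2 * (2^k * r)) ≤ D * G.vol x (2^k * r) := hD x _ (by positivity)
    _ ≤ D * (D^k * G.vol x r) := mul_le_mul_of_nonneg_left ih (by linarith)
    _ = D^(k+1) * G.vol x r := by ring

/-- volume comparison between radius `a` and radius `b ≤ 2^k a` -/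
lemma vol_comp (x : Γ) {a b : ℝ} (ha : 0 < a) (k : ℕ) (hb : b ≤ 2^k * a) :
    G.vol x b ≤ D^k * G.vol x a :=
  (vol_mono hp1 hker x hb).trans (vol_doubling_iter hp1 hker hD x ha k)

end VD

end Vol

end WGraph
namespace WGraph

variable {Γ : Type*} {G : WGraph Γ} {p0 : ℝ}

section FFacts

variable {F : Γ → ℕ → ℝ} {c0 : ℝ} (hc0 : 0 < c0)
  (hlow : ∀ (x : Γ) (R : ℕ), c0 * (R:ℝ)^2 ≤ F x R)
  (hstep : ∀ (x : Γ) (R : ℕ), F x R + 1 ≤ F x (R+1))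
include hc0 hlow hstep

omit hc0 hstep in
lemma F_nonneg0 (x : Γ) : 0 ≤ F x 0 := by
  have := hlow x 0
  norm_num at this
  exact this

omit hc0 hlow in
lemma F_lower_lin (x : Γ) (R : ℕ) : F x 0 + R ≤ F x R := by
  induction R with
  | zero => simp
  | succ R ih =>
    have := hstep x R
    push_cast
    push_cast at ih
    linarith

omit hc0 in
lemma F_pos (x : Γ) (R : ℕ) (hR : 0 < R) : (R:ℝ) ≤ F x R := by
  have h1 := F_lower_lin hstep (F := F) x R
  have h2 := F_nonneg0 hlow (F := F) x
  linarith

omit hc0 hlow in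
lemma F_mono (x : Γ) {R R' : ℕ} (h : R ≤ R') : F x R ≤ F x R' := by
  induction R' with
  | zero => rw [Nat.le_zero.mp h]
  | succ R' ih =>
    rcases Nat.lt_or_ge R (R'+1) with h' | h'
    · have := hstep x R'
      have := ih (Nat.lt_succ_iff.mp h')
      linarith
    · rw [le_antisymm h h']

omit hc0 in
lemma invF'_le {x : Γ} {n R : ℕ} (h : (n:ℝ) ≤ F x R) : invF' F x n ≤ R :=
  Nat.sInf_le h

omit hc0 in
lemma invF'_spec (x : Γ) (n : ℕ) : (n:ℝ) ≤ F x (invF' F x n) := by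
  have hne : {R : ℕ | (n:ℝ) ≤ F x R}.Nonempty := by
    refine ⟨n, ?_⟩
    show (n:ℝ) ≤ F x n
    have h1 := F_lower_lin hstep (F := F) x n
    have h2 := F_nonneg0 hlow (F := F) x
    linarith
  exact Nat.sInf_mem hne

omit hc0 in
lemma invF'_pos {x : Γ} {n : ℕ} (h : F x 0 < (n:ℝ)) : 1 ≤ invF' F x n := by
  by_contra hcon
  have h0 : invF' F x n = 0 := by omega
  have := invF'_spec hlow hstep (F := F) x n
  rw [h0] at this
  linarith

omit hc0 in
lemma invF'_pred {x : Γ} {n : ℕ} (h : 1 ≤ invF' F x n) :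
    F x (invF' F x n - 1) < (n:ℝ) := by
  have hlt : invF' F x n - 1 < invF' F x n := by omega
  have h2 : invF' F x n - 1 ∉ {R : ℕ | (n:ℝ) ≤ F x R} :=
    Nat.notMem_of_lt_sInf hlt
  simpa using not_le.mp h2

lemma invF'_sq {x : Γ} {n : ℕ} (h : 1 ≤ invF' F x n) :
    c0 * ((invF' F x n : ℝ) - 1)^2 < (n:ℝ) := by
  have h1 := invF'_pred hlow hstep (F := F) h
  have h2 := hlow x (invF' F x n - 1)
  have h3 : ((invF' F x n - 1 : ℕ):ℝ) = (invF' F x n : ℝ) - 1 := by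
    push_cast [h]
    ring
  rw [h3] at h2
  linarith

lemma invF'_le_n {x : Γ} {n : ℕ} (h : 1 ≤ invF' F x n) (h4 : 4/c0 ≤ (n:ℝ)) :
    (invF' F x n : ℝ) ≤ (n:ℝ) := by
  by_contra hcon
  push_neg at hcon
  have hf1 : (n:ℝ) ≤ (invF' F x n : ℝ) - 1 := by
    have h5 : n < invF' F x n := by exact_mod_cast hcon
    have h6 : n + 1 ≤ invF' F x n := h5
    have h7 : ((n:ℕ):ℝ) + 1 ≤ ((invF' F x n : ℕ):ℝ) := by exact_mod_cast h6
    linarith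
  have hsq := invF'_sq hc0 hlow hstep (F := F) h
  have hn0 : (0:ℝ) ≤ n := Nat.cast_nonneg n
  have hsq2 : (n:ℝ)^2 ≤ ((invF' F x n : ℝ) - 1)^2 := by nlinarith
  have hq : c0 * (n:ℝ)^2 < (n:ℝ) := by nlinarith
  have h4' : 4 ≤ c0 * n := by
    rw [div_le_iff₀ hc0] at h4
    nlinarith
  nlinarith

end FFacts

end WGraph
namespace WGraph

variable {Γ : Type*} {G : WGraph Γ} {p0 : ℝ}

section Main

variable (hp1 : 0 < p0) (hker : ∀ x y, G.adj x y → p0 ≤ G.kerP x y)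
  {D : ℝ} (hD : ∀ (x : Γ) (R : ℝ), 0 < R → G.vol x (2*R) ≤ D * G.vol x R)
  {F : Γ → ℕ → ℝ} {c0 : ℝ} (hc0 : 0 < c0)
  (hlow : ∀ (x : Γ) (R : ℕ), c0 * (R:ℝ)^2 ≤ F x R)
  (hstep : ∀ (x : Γ) (R : ℕ), F x R + 1 ≤ F x (R+1))
  {c δ ε : ℝ} (hc : 0 < c) (hδ0 : 0 < δ) (hδ1 : δ < 1) (hε0 : 0 < ε) (hε1 : ε < 1)
  (hPLE : ∀ (x : Γ) (R : ℕ), 0 < R → ∀ (n : ℕ) (y : Γ),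
      (n:ℝ) ≤ ε * F x R →
      (G.dist x y : ℝ) < min (n:ℝ) (δ * (invF' F x n : ℝ)) →
        c / G.vol x (invF' F x n : ℝ) ≤ G.hktA (G.ball x (R:ℝ)) n x y)

include hp1 hker hD hc0 hlow hstep hc hδ0 hδ1 hε0 hε1 hPLE

/-- single-point PLE estimate -/
lemma ple_point (x : Γ) (R : ℕ) (hR : 0 < R) (n : ℕ) (hn1 : 1 ≤ n)
    (hF0 : F x 0 < (n:ℝ)) (hnε : (n:ℝ) ≤ ε * F x R) :
    c / D ^ (invF' F x n) ≤
      2 * G.sfun (G.ball x (R:ℝ)) (ball_finite hp1 hker x (R:ℝ)).toFinset n x := by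
  set A := G.ball x (R:ℝ) with hA
  set AF := (ball_finite hp1 hker x (R:ℝ)).toFinset with hAFdef
  have hAF : ∀ y, y ∈ AF ↔ y ∈ A := fun y => by simp [hAFdef, hA]
  set f := invF' F x n with hf
  have hf1 : 1 ≤ f := invF'_pos hlow hstep hF0
  have hf0 : (0:ℝ) < f := by exact_mod_cast hf1
  have hmin : (0:ℝ) < min (n:ℝ) (δ * f) := by
    refine lt_min ?_ (by positivity)
    exact_mod_cast hn1
  have hdist : (G.dist x x : ℝ) < min (n:ℝ) (δ * (f:ℝ)) := by
    rw [G.dist_self]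
    simpa using hmin
  have hP := hPLE x R hR n x hnε hdist
  rw [WGraph.hktA, WGraph.hkA, WGraph.hkA, ← add_div] at hP
  have hvx : 0 < G.vtx x := vtx_pos hp1 hker x
  have hvf : 0 < G.vol x (f:ℝ) := vol_pos hp1 hker x hf0
  rw [div_le_div_iff₀ hvf hvx] at hP
  -- hP : c * vtx x ≤ (P_n + P_{n+1}) * vol x f
  have hxA : x ∈ A := by
    show (G.dist x x : ℝ) < R
    rw [G.dist_self]
    exact_mod_cast hR
  have hxAF : x ∈ AF := (hAF x).mpr hxA
  have hs1 : G.killedP A n x x ≤ G.sfun A AF n x := killedP_le_sfun hp1 hker hAF n x x hxAF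
  have hs2 : G.killedP A (n+1) x x ≤ G.sfun A AF (n+1) x := killedP_le_sfun hp1 hker hAF (n+1) x x hxAF
  have hs3 : G.sfun A AF (n+1) x ≤ G.sfun A AF n x := sfun_succ_le hp1 hker hAF n x
  have hvol_le : G.vol x (f:ℝ) ≤ D ^ f * G.vtx x := by
    have h2f : (f:ℝ) ≤ 2^f * 1 := by
      rw [mul_one]
      have := Nat.lt_two_pow_self (n := f)
      exact_mod_cast this.le
    have := vol_comp hp1 hker hD x one_pos f h2f
    rwa [vol_one] at this
  have hD1 : 1 ≤ D := D_ge_one hp1 hker hD ⟨x, trivial⟩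
  have hDk : (0:ℝ) < D ^ f := pow_pos (by linarith) f
  have hsn : 0 ≤ G.sfun A AF n x := sfun_nonneg' hp1 hker n x
  rw [div_le_iff₀ hDk]
  -- c ≤ 2 * sfun * D^f
  nlinarith [mul_le_mul_of_nonneg_right (add_le_add (hs1.trans le_rfl) (hs2.trans hs3))
      hvf.le, mul_le_mul_of_nonneg_left hvol_le (mul_nonneg (by norm_num : (0:ℝ) ≤ 2) hsn)]

/-- ball PLE estimate -/
lemma ple_ball (x : Γ) (R : ℕ) (hR : 0 < R) (n : ℕ) (hn1 : 1 ≤ n)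
    (hF0 : F x 0 < (n:ℝ)) (h4 : 4/c0 ≤ (n:ℝ)) (hnε : (n:ℝ) ≤ ε * F x R)
    (k : ℕ) (hk : 1 ≤ 2^k * δ) :
    c / D ^ k ≤
      2 * G.sfun (G.ball x (R:ℝ)) (ball_finite hp1 hker x (R:ℝ)).toFinset n x := by
  set A := G.ball x (R:ℝ) with hA
  set AF := (ball_finite hp1 hker x (R:ℝ)).toFinset with hAFdef
  have hAF : ∀ y, y ∈ AF ↔ y ∈ A := fun y => by simp [hAFdef, hA]
  set f := invF' F x n with hf
  have hf1 : 1 ≤ f := invF'_pos hlow hstep hF0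
  have hf0 : (0:ℝ) < f := by exact_mod_cast hf1
  have hfn : (f:ℝ) ≤ (n:ℝ) := invF'_le_n hc0 hlow hstep hf1 h4
  have hδf0 : 0 < δ * (f:ℝ) := by positivity
  have hmin_eq : min (n:ℝ) (δ * (f:ℝ)) = δ * (f:ℝ) := by
    refine min_eq_right ?_
    nlinarith
  have hFpos : (0:ℝ) < F x R := by
    have := F_pos hlow hstep x R hR
    have hR1 : (1:ℝ) ≤ R := by exact_mod_cast hR
    linarith
  have hfR : f ≤ R := by
    refine invF'_le hlow hstep ?_
    nlinarith
  have hδfR : δ * (f:ℝ) ≤ (R:ℝ) := by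
    have hfRr : (f:ℝ) ≤ (R:ℝ) := by exact_mod_cast hfR
    nlinarith
  set BF := (ball_finite hp1 hker x (δ * (f:ℝ))).toFinset with hBFdef
  have hBA : BF ⊆ AF := by
    intro y hy
    have h1 : y ∈ G.ball x (δ * (f:ℝ)) := by simpa [hBFdef] using hy
    have h2 : (G.dist x y : ℝ) < δ * (f:ℝ) := h1
    refine (hAF y).mpr ?_
    show (G.dist x y : ℝ) < R
    linarith
  have hvf : 0 < G.vol x (f:ℝ) := vol_pos hp1 hker x hf0
  have hperY : ∀ y ∈ BF, c * G.vtx y ≤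
      (G.killedP A n x y + G.killedP A (n+1) x y) * G.vol x (f:ℝ) := by
    intro y hy
    have h1 : y ∈ G.ball x (δ * (f:ℝ)) := by simpa [hBFdef] using hy
    have h2 : (G.dist x y : ℝ) < min (n:ℝ) (δ * (f:ℝ)) := by
      rw [hmin_eq]; exact h1
    have hP := hPLE x R hR n y hnε h2
    rw [WGraph.hktA, WGraph.hkA, WGraph.hkA, ← add_div] at hP
    have hvy : 0 < G.vtx y := vtx_pos hp1 hker y
    rw [div_le_div_iff₀ hvf hvy] at hP
    exact hP
  have hsum : c * G.vol x (δ * (f:ℝ)) ≤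
      (G.sfun A AF n x + G.sfun A AF (n+1) x) * G.vol x (f:ℝ) := by
    have e1 : G.vol x (δ * (f:ℝ)) = ∑ y ∈ BF, G.vtx y :=
      setVol_eq_sum (ball_finite hp1 hker x (δ * (f:ℝ)))
    rw [e1, Finset.mul_sum]
    calc ∑ y ∈ BF, c * G.vtx y
        ≤ ∑ y ∈ BF, (G.killedP A n x y + G.killedP A (n+1) x y) * G.vol x (f:ℝ) :=
          Finset.sum_le_sum hperY
      _ = (∑ y ∈ BF, (G.killedP A n x y + G.killedP A (n+1) x y)) * G.vol x (f:ℝ) := by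
          rw [Finset.sum_mul]
      _ ≤ (G.sfun A AF n x + G.sfun A AF (n+1) x) * G.vol x (f:ℝ) := by
          refine mul_le_mul_of_nonneg_right ?_ hvf.le
          rw [Finset.sum_add_distrib]
          refine add_le_add ?_ ?_ <;>
          · refine Finset.sum_le_sum_of_subset_of_nonneg hBA ?_ |>.trans ?_
            · intro y _ _; exact killedP_nonneg hp1 hker A _ x y
            · exact le_rfl
  have hvol_le : G.vol x (f:ℝ) ≤ D ^ k * G.vol x (δ * (f:ℝ)) := by
    refine vol_comp hp1 hker hD x hδf0 k ?_
    nlinarith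
  have hD1 : 1 ≤ D := D_ge_one hp1 hker hD ⟨x, trivial⟩
  have hDk : (0:ℝ) < D ^ k := pow_pos (by linarith) k
  have hsn : 0 ≤ G.sfun A AF n x := sfun_nonneg' hp1 hker n x
  have hs3 : G.sfun A AF (n+1) x ≤ G.sfun A AF n x := sfun_succ_le hp1 hker hAF n x
  have hvδ : 0 < G.vol x (δ * (f:ℝ)) := vol_pos hp1 hker x hδf0
  rw [div_le_iff₀ hDk]
  nlinarith [mul_le_mul_of_nonneg_left hvol_le (mul_nonneg (by norm_num : (0:ℝ) ≤ 2) hsn)]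

end Main

end WGraph
lemma aux_step2 {D τ : ℝ} (hD : 1 ≤ D) (hτ0 : 0 < τ) (hτ1 : τ < 1) (K : ℕ)
    (hK : τ^K < 1/D) (m : ℕ) : D^(m+1) * τ^(m^2) ≤ D^(K+1) := by
  have hD0 : 0 < D := by linarith
  rcases le_or_gt K m with h | h
  · have e1 : D^(m+1) * τ^(m^2) = D * (D * τ^m)^m := by
      rw [mul_pow, ← pow_mul, ← sq, pow_succ]
      ring
    have h2 : τ^m ≤ τ^K := pow_le_pow_of_le_one hτ0.le hτ1.le h
    have h3 : D * τ^m ≤ 1 := by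
      have h5 : D * τ^K ≤ D * (1/D) := by nlinarith
      have h6 : D * (1/D) = 1 := by field_simp
      nlinarith
    have h4 : (D * τ^m)^m ≤ 1 := pow_le_one₀ (by positivity) h3
    rw [e1]
    calc D * (D * τ^m)^m ≤ D * 1 := by nlinarith
    _ = D := mul_one D
    _ ≤ D^(K+1) := le_self_pow₀ hD (by omega)
  · have h1 : D^(m+1) ≤ D^(K+1) := pow_le_pow_right₀ hD (by omega)
    have h2 : τ^(m^2) ≤ 1 := pow_le_one₀ hτ0.le hτ1.le
    nlinarith [pow_pos hD0 (m+1)]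

lemma aux_arith {c D θ c0 : ℝ} {L : ℕ} (hc : 0 < c) (hD : 1 ≤ D)
    (hθa : 1/2 ≤ θ) (hθb : θ < 1) (hc0 : 0 < c0) (hL : 0 < L) :
    ∃ N0 : ℕ, 1 ≤ N0 ∧ ∀ (n f : ℕ), 1 ≤ f → c0 * ((f:ℝ)-1)^2 < n →
      c / D^f ≤ 2 * θ^(n / L) → n ≤ N0 := by
  have hθ0 : 0 < θ := by linarith
  have hL' : (0:ℝ) < L := by exact_mod_cast hL
  obtain ⟨σ, hσdef⟩ : ∃ s, s = θ ^ ((1:ℝ)/(2*L)) := ⟨_, rfl⟩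
  obtain ⟨τ, hτdef⟩ : ∃ s, s = θ ^ (c0/(2*L)) := ⟨_, rfl⟩
  have hσ0 : 0 < σ := hσdef ▸ Real.rpow_pos_of_pos hθ0 _
  have hσ1 : σ < 1 := hσdef ▸ Real.rpow_lt_one hθ0.le hθb (by positivity)
  have hτ0 : 0 < τ := hτdef ▸ Real.rpow_pos_of_pos hθ0 _
  have hτ1 : τ < 1 := hτdef ▸ Real.rpow_lt_one hθ0.le hθb (by positivity)
  have hD0 : 0 < D := by linarith
  obtain ⟨K, hK⟩ := exists_pow_lt_of_lt_one (show (0:ℝ) < 1/D by positivity) hτ1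
  have hB0 : (0:ℝ) < D^(K+1) := pow_pos hD0 _
  obtain ⟨N0, hN0⟩ := exists_pow_lt_of_lt_one
    (show (0:ℝ) < c/(4*D^(K+1)) by positivity) hσ1
  refine ⟨max N0 1, le_max_right _ _, ?_⟩
  intro n f hf hsq hineq
  -- step 1 : θ^(n/L) ≤ 2 * σ^n * τ^((f-1)^2)
  have step1 : θ^(n / L) ≤ 2 * σ^n * τ^((f-1)^2) := by
    have e1 : θ^(n/L) = θ^(((n/L : ℕ)):ℝ) := (Real.rpow_natCast θ _).symm
    have e2 : θ^(((n/L : ℕ)):ℝ) ≤ θ^((n:ℝ)/L - 1) :=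
      Real.rpow_le_rpow_of_exponent_ge hθ0 hθb.le (nat_div_cast_ge hL)
    have e3 : θ^((n:ℝ)/L - 1) = θ⁻¹ * θ^((n:ℝ)/(2*L)) * θ^((n:ℝ)/(2*L)) := by
      rw [← Real.rpow_neg_one θ, ← Real.rpow_add hθ0, ← Real.rpow_add hθ0]
      ring_nf
    have e4 : θ^((n:ℝ)/(2*L)) = σ^n := by
      rw [hσdef, ← Real.rpow_natCast (θ ^ ((1:ℝ)/(2*L))) n, ← Real.rpow_mul hθ0.le]
      ring_nf
    have e5 : θ^((n:ℝ)/(2*L)) ≤ τ^((f-1)^2) := by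
      have hm : (((f-1)^2 : ℕ):ℝ) = ((f:ℝ)-1)^2 := by
        have hc1 : ((f-1:ℕ):ℝ) = (f:ℝ) - 1 := by push_cast [hf]; ring
        push_cast
        rw [hc1]
      rw [hτdef, ← Real.rpow_natCast (θ ^ (c0/(2*L))) _, ← Real.rpow_mul hθ0.le, hm]
      refine Real.rpow_le_rpow_of_exponent_ge hθ0 hθb.le ?_
      calc c0/(2*(L:ℝ)) * ((f:ℝ)-1)^2 = (c0 * ((f:ℝ)-1)^2)/(2*(L:ℝ)) := by ring
        _ ≤ (n:ℝ)/(2*(L:ℝ)) := by gcongr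
    have hinv : θ⁻¹ ≤ 2 := by
      rw [show (2:ℝ) = (1/2)⁻¹ by norm_num]
      exact inv_anti₀ (by norm_num) hθa
    have hX0 : 0 ≤ θ^((n:ℝ)/(2*L)) := (Real.rpow_pos_of_pos hθ0 _).le
    have hXX : θ^((n:ℝ)/(2*L)) * θ^((n:ℝ)/(2*L)) ≤ σ^n * τ^((f-1)^2) :=
      mul_le_mul e4.le e5 hX0 (pow_nonneg hσ0.le n)
    calc θ^(n/L) = θ^(((n/L : ℕ)):ℝ) := e1
      _ ≤ θ^((n:ℝ)/L - 1) := e2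
      _ = θ⁻¹ * (θ^((n:ℝ)/(2*L)) * θ^((n:ℝ)/(2*L))) := by rw [e3]; ring
      _ ≤ 2 * (σ^n * τ^((f-1)^2)) := by
          have := mul_nonneg hX0 hX0
          nlinarith
      _ = 2 * σ^n * τ^((f-1)^2) := by ring
  -- step 2
  have step2 : D^f * τ^((f-1)^2) ≤ D^(K+1) := by
    obtain ⟨m, rfl⟩ : ∃ m, f = m + 1 := ⟨f - 1, by omega⟩
    have hm1 : (m + 1) - 1 = m := by omega
    rw [hm1]
    exact aux_step2 hD hτ0 hτ1 K hK m
  -- combine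
  have hσn0 : (0:ℝ) < σ^n := pow_pos hσ0 n
  have hτm0 : (0:ℝ) < τ^((f-1)^2) := pow_pos hτ0 _
  have hDf0 : (0:ℝ) < D^f := pow_pos hD0 f
  have hcomb : c ≤ 4 * D^(K+1) * σ^n := by
    have h1 : c ≤ D^f * (2 * θ^(n/L)) := by
      rw [div_le_iff₀ hDf0] at hineq
      linarith
    have h2 : D^f * (2 * θ^(n/L)) ≤ D^f * (2 * (2 * σ^n * τ^((f-1)^2))) :=
      mul_le_mul_of_nonneg_left (by linarith) hDf0.le
    have h4 : 4 * σ^n * (D^f * τ^((f-1)^2)) ≤ 4 * σ^n * D^(K+1) :=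
      mul_le_mul_of_nonneg_left step2 (by positivity)
    calc c ≤ D^f * (2 * θ^(n/L)) := h1
      _ ≤ D^f * (2 * (2 * σ^n * τ^((f-1)^2))) := h2
      _ = 4 * σ^n * (D^f * τ^((f-1)^2)) := by ring
      _ ≤ 4 * σ^n * D^(K+1) := h4
      _ = 4 * D^(K+1) * σ^n := by ring
  by_contra hcon
  push_neg at hcon
  have hn : N0 ≤ n := by omega
  have h5 : σ^n ≤ σ^N0 := pow_le_pow_of_le_one hσ0.le hσ1.le hn
  have h6 : σ^N0 < c/(4*D^(K+1)) := hN0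
  rw [lt_div_iff₀ (by positivity)] at h6
  have h7 : 4 * D^(K+1) * σ^n ≤ 4 * D^(K+1) * σ^N0 :=
    mul_le_mul_of_nonneg_left h5 (by positivity)
  nlinarith

namespace WGraph

variable {Γ : Type*} {G : WGraph Γ} {p0 : ℝ}

lemma greenF_nonneg (hp1 : 0 < p0) (hker : ∀ x y, G.adj x y → p0 ≤ G.kerP x y)
    (A : Set Γ) (x y : Γ) : 0 ≤ G.greenF A x y :=
  tsum_nonneg fun n => killedP_nonneg hp1 hker A n x y

lemma exitE_eq_sum {A : Set Γ} (hA : A.Finite) (x : Γ) :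
    G.exitE A x = ∑ y ∈ hA.toFinset, G.greenF A x y := by
  rw [WGraph.exitE, tsum_subtype A (G.greenF A x)]
  rw [tsum_eq_sum (s := hA.toFinset)]
  · refine Finset.sum_congr rfl fun y hy => ?_
    rw [Set.indicator_of_mem (by simpa using hy)]
  · intro y hy
    rw [Set.indicator_of_notMem (by simpa using hy)]

section EE

variable (hp1 : 0 < p0) (hp2 : p0 ≤ 1/2) (hker : ∀ x y, G.adj x y → p0 ≤ G.kerP x y)
  {A : Set Γ} (hA : A.Finite)
  {L : ℕ} (hL : 0 < L) (hexit : ∀ y ∈ A, ∃ z, G.adjN L y z ∧ z ∉ A)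
include hp1 hp2 hker hA hL hexit

lemma exitE_ge_sfun_sum (x : Γ) (N : ℕ) :
    ∑ n ∈ Finset.range N, G.sfun A hA.toFinset n x ≤ G.exitE A x := by
  have hAF : ∀ y, y ∈ hA.toFinset ↔ y ∈ A := fun y => by simp
  rw [exitE_eq_sum hA x]
  have h1 : ∀ y ∈ hA.toFinset,
      ∑ n ∈ Finset.range N, G.killedP A n x y ≤ G.greenF A x y := fun y hy =>
    greenF_ge_partial hp1 hker hAF hL hexit hp2 x y hy N
  calc ∑ n ∈ Finset.range N, G.sfun A hA.toFinset n x
      = ∑ y ∈ hA.toFinset, ∑ n ∈ Finset.range N, G.killedP A n x y := by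
        rw [Finset.sum_comm]
        rfl
    _ ≤ ∑ y ∈ hA.toFinset, G.greenF A x y := Finset.sum_le_sum h1

end EE

end WGraph
set_option maxHeartbeats 1600000 in
/-- under (p0) and (VD), if F ∈ W₀ and PLE(F) holds, then
E(x,R) ≥ c·F(x,R). -/
theorem statement12 {Γ : Type*} (G : WGraph Γ) (hp0 : G.p0cond) (hVD : G.VD)
    (F : Γ → ℕ → ℝ) (hF : G.memW0 F) (hPLE : G.PLE F) :
    ∃ c > (0:ℝ), ∀ (x : Γ) (R : ℕ), 0 < R → c * F x R ≤ G.meanE x (R:ℝ) := by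
  classical
  obtain ⟨p, hp, hkerp⟩ := hp0
  set p0 := min p (1/2 : ℝ) with hp0def
  have hp1 : 0 < p0 := lt_min hp (by norm_num)
  have hp2 : p0 ≤ 1/2 := min_le_right _ _
  have hker : ∀ x y, G.adj x y → p0 ≤ G.kerP x y :=
    fun x y h => (min_le_left _ _).trans (hkerp x y h)
  obtain ⟨D, hD0, hD⟩ := hVD
  obtain ⟨⟨β, hβ, β', hβ', hreg⟩, ⟨c0, hc0, hlow⟩, hstep⟩ := hF
  obtain ⟨cF, hcF, CF, hCF, hregs⟩ := hreg
  obtain ⟨c, δ, ε, hc, hc1, hδ0, hδ1, hε0, hε1, hPLEm⟩ := hPLE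
  haveI := G.inf
  haveI : Nonempty Γ := inferInstance
  have hD1 : 1 ≤ D := WGraph.D_ge_one hp1 hker hD ⟨Classical.arbitrary Γ, trivial⟩
  -- choose R0
  obtain ⟨R0', hR0'⟩ := exists_nat_ge ((max 1 (2/(ε*cF))) ^ ((1:ℝ)/β'))
  set R0 : ℕ := max R0' 2 with hR0def
  have hR02 : 2 ≤ R0 := le_max_right _ _
  have hR0pos : 0 < R0 := by omega
  have hεcF : 2 ≤ ε * cF * (R0:ℝ)^β' := by
    have ht1 : (1:ℝ) ≤ max 1 (2/(ε*cF)) := le_max_left _ _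
    have ht0 : (0:ℝ) ≤ max 1 (2/(ε*cF)) := by linarith
    have h1 : (max 1 (2/(ε*cF))) ^ ((1:ℝ)/β') ≤ (R0:ℝ) := by
      refine hR0'.trans ?_
      exact_mod_cast Nat.cast_le.mpr (le_max_left R0' 2)
    have h2 : ((max 1 (2/(ε*cF))) ^ ((1:ℝ)/β')) ^ β' ≤ (R0:ℝ)^β' :=
      Real.rpow_le_rpow (Real.rpow_nonneg ht0 _) h1 hβ'.le
    have h3 : ((max 1 (2/(ε*cF))) ^ ((1:ℝ)/β')) ^ β' = max 1 (2/(ε*cF)) := by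
      rw [← Real.rpow_mul ht0, one_div, inv_mul_cancel₀ (by linarith : β' ≠ 0),
        Real.rpow_one]
    have h4 : 2/(ε*cF) ≤ (R0:ℝ)^β' := by
      rw [h3] at h2
      exact (le_max_right _ _).trans h2
    rw [div_le_iff₀ (by positivity)] at h4
    nlinarith
  set L0 : ℕ := 2 * R0 with hL0def
  have hL0 : 0 < L0 := by omega
  set θ0 : ℝ := 1 - p0 ^ L0 with hθ0def
  have hθ0a : 1/2 ≤ θ0 := by
    have h1 : p0 ^ L0 ≤ (1/2:ℝ) ^ L0 := pow_le_pow_left₀ hp1.le hp2 L0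
    have h2 : (1/2:ℝ)^L0 ≤ (1/2:ℝ)^1 := pow_le_pow_of_le_one (by norm_num) (by norm_num) hL0
    rw [hθ0def]
    norm_num at h2 ⊢
    linarith
  have hθ0b : θ0 < 1 := by
    have : 0 < p0 ^ L0 := pow_pos hp1 L0
    rw [hθ0def]; linarith
  obtain ⟨Naux, hNaux1, hNaux⟩ := aux_arith hc hD1 hθ0a hθ0b hc0 hL0
  -- bound F x 1 uniformly
  have hF1 : ∀ x : Γ, F x 1 ≤ Naux := by
    intro x
    have hFx1 : (1:ℝ) ≤ F x 1 := by
      have := WGraph.F_pos hlow hstep x 1 one_pos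
      simpa using this
    set n : ℕ := ⌊F x 1⌋₊ + 1 with hndef
    have hflo : (⌊F x 1⌋₊:ℝ) ≤ F x 1 := Nat.floor_le (by linarith)
    have hfhi : F x 1 < (n:ℝ) := by
      rw [hndef]; push_cast
      exact Nat.lt_floor_add_one (F x 1)
    have hnle : (n:ℝ) ≤ F x 1 + 1 := by
      rw [hndef]; push_cast; linarith
    have hF0x : F x 0 ≤ F x 1 - 1 := by linarith [hstep x 0]
    have hF0n : F x 0 < (n:ℝ) := by linarith
    have hn1 : 1 ≤ n := by omega
    have hnε : (n:ℝ) ≤ ε * F x R0 := by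
      have hw := (hregs x x R0 1 one_pos (by omega) (by
        rw [G.dist_self]; omega)).1
      have he : ((R0:ℝ)/((1:ℕ):ℝ)) = (R0:ℝ) := by norm_num
      rw [he] at hw
      have hF1pos : (0:ℝ) < F x 1 := by linarith
      rw [le_div_iff₀ hF1pos] at hw
      -- hw : cF * R0^β' * F x 1 ≤ F x R0
      nlinarith
    have hexit0 := WGraph.ball_exit hp1 hker x R0 hR0pos
    set A := G.ball x (R0:ℝ) with hA
    have hAfin : A.Finite := WGraph.ball_finite hp1 hker x (R0:ℝ)
    have hAF : ∀ y, y ∈ (WGraph.ball_finite hp1 hker x ((R0:ℕ):ℝ)).toFinset ↔ y ∈ A :=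
      fun y => by simp [hA]
    have hple := WGraph.ple_point hp1 hker hD hc0 hlow hstep hc hδ0 hδ1 hε0 hε1 hPLEm
      x R0 hR0pos n hn1 hF0n hnε
    have hdecay := WGraph.sfun_pow_bound hp1 hker hAF hL0 (by
        intro y hy; exact hexit0 y hy) n x
    have hcomb : c / D ^ (WGraph.invF' F x n) ≤ 2 * θ0 ^ (n / L0) := by
      refine hple.trans ?_
      rw [hθ0def]
      linarith
    have hf1 : 1 ≤ WGraph.invF' F x n := WGraph.invF'_pos hlow hstep hF0n
    have hsq := WGraph.invF'_sq hc0 hlow hstep hf1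
    have hnN := hNaux n (WGraph.invF' F x n) hf1 hsq hcomb
    have : (n:ℝ) ≤ Naux := by exact_mod_cast hnN
    linarith
  -- choose k for VD iteration
  obtain ⟨k, hk⟩ := pow_unbounded_of_one_lt (1/δ) (by norm_num : (1:ℝ) < 2)
  have hk21 : 1 ≤ 2^k * δ := by
    rw [div_lt_iff₀ hδ0] at hk
    linarith
  -- define constants
  set N1 : ℕ := ⌈4/c0⌉₊ with hN1def
  set M : ℕ := max (max N1 Naux) 1 with hMdef
  have hM1 : 1 ≤ M := le_max_right _ _
  set c2 : ℝ := c / (2 * D^k) with hc2def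
  have hc2 : 0 < c2 := by
    rw [hc2def]
    have : (0:ℝ) < D^k := pow_pos (by linarith) k
    positivity
  set K1 : ℝ := (2*(M:ℝ)+4)/ε with hK1def
  have hK1pos : 0 < K1 := by
    rw [hK1def]
    positivity
  refine ⟨min (c2*ε/2) (1/K1), lt_min (by positivity) (by positivity), ?_⟩
  intro x R hR
  set A := G.ball x (R:ℝ) with hA
  have hAfin : A.Finite := WGraph.ball_finite hp1 hker x (R:ℝ)
  have hAF : ∀ y, y ∈ hAfin.toFinset ↔ y ∈ A := fun y => by simp [hA]
  have hL : 0 < 2*R := by omega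
  have hexit : ∀ y ∈ A, ∃ z, G.adjN (2*R) y z ∧ z ∉ A :=
    fun y hy => WGraph.ball_exit hp1 hker x R hR y hy
  have hE : ∀ N : ℕ, ∑ n ∈ Finset.range N, G.sfun A hAfin.toFinset n x ≤ G.meanE x (R:ℝ) :=
    fun N => WGraph.exitE_ge_sfun_sum hp1 hp2 hker hAfin hL hexit x N
  have hxA : x ∈ A := by
    show (G.dist x x : ℝ) < R
    rw [G.dist_self]
    exact_mod_cast hR
  have hFR1 : (1:ℝ) ≤ F x R := by
    have h1 := WGraph.F_pos hlow hstep x R hR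
    have h2 : (1:ℝ) ≤ (R:ℝ) := by exact_mod_cast hR
    linarith
  rcases le_or_gt (F x R) K1 with hcase | hcase
  · -- small F: use E ≥ 1
    have hE1 : (1:ℝ) ≤ G.meanE x (R:ℝ) := by
      have := hE 1
      rw [Finset.sum_range_one, WGraph.sfun_zero_mem hp1 hker hAF x hxA] at this
      exact this
    calc min (c2*ε/2) (1/K1) * F x R ≤ (1/K1) * K1 := by
          refine mul_le_mul (min_le_right _ _) hcase (by linarith) (by positivity)
      _ = 1 := by field_simp
      _ ≤ G.meanE x (R:ℝ) := hE1
  · -- main case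
    set N : ℕ := ⌊ε * F x R⌋₊ with hNdef
    have hNge : ε * F x R - 1 ≤ (N:ℝ) := by
      rw [hNdef]
      have := Nat.lt_floor_add_one (ε * F x R)
      linarith
    have hNle : (N:ℝ) ≤ ε * F x R := Nat.floor_le (by positivity)
    have hεK1 : 2*(M:ℝ)+4 ≤ ε * F x R := by
      rw [hK1def] at hcase
      rw [div_lt_iff₀ hε0] at hcase
      calc 2*(M:ℝ)+4 ≤ F x R * ε := hcase.le
        _ = ε * F x R := mul_comm _ _
    have hMN : M ≤ N := by
      have h1 : (M:ℝ) ≤ (N:ℝ) := by linarith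
      exact_mod_cast h1
    -- per-n lower bound
    have hsL : ∀ n, M ≤ n → n ≤ N → c2 ≤ G.sfun A hAfin.toFinset n x := by
      intro n hMn hnN
      have hn1 : 1 ≤ n := le_trans hM1 hMn
      have hNauxn : (Naux:ℝ) ≤ (n:ℝ) := by
        have : Naux ≤ n := le_trans ((le_max_right N1 Naux).trans (le_max_left _ 1)) hMn
        exact_mod_cast this
      have hF0 : F x 0 < (n:ℝ) := by
        have h1 := hstep x 0
        have h2 := hF1 x
        have h3 : (1:ℝ) ≤ Naux := by exact_mod_cast hNaux1
        linarith
      have h4c : 4/c0 ≤ (n:ℝ) := by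
        have h1 : N1 ≤ n := le_trans ((le_max_left N1 Naux).trans (le_max_left _ 1)) hMn
        have h2 : (N1:ℝ) ≤ (n:ℝ) := by exact_mod_cast h1
        have h3 : 4/c0 ≤ (N1:ℝ) := Nat.le_ceil _
        linarith
      have hnε : (n:ℝ) ≤ ε * F x R := by
        have : (n:ℝ) ≤ (N:ℝ) := by exact_mod_cast hnN
        linarith
      have hple := WGraph.ple_ball hp1 hker hD hc0 hlow hstep hc hδ0 hδ1 hε0 hε1 hPLEm
        x R hR n hn1 hF0 h4c hnε k hk21
      rw [hc2def, div_le_iff₀ (show (0:ℝ) < 2*D^k by positivity)]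
      rw [div_le_iff₀ (show (0:ℝ) < D^k by positivity)] at hple
      calc c ≤ 2 * G.sfun A hAfin.toFinset n x * D^k := hple
        _ = G.sfun A hAfin.toFinset n x * (2*D^k) := by ring
    -- sum up
    have hsum1 : ∑ n ∈ Finset.Icc M N, G.sfun A hAfin.toFinset n x ≤
        ∑ n ∈ Finset.range (N+1), G.sfun A hAfin.toFinset n x := by
      refine Finset.sum_le_sum_of_subset_of_nonneg ?_ ?_
      · intro n hn
        simp only [Finset.mem_Icc] at hn
        simp only [Finset.mem_range]
        omega
      · intro n _ _
        exact WGraph.sfun_nonneg' hp1 hker n x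
    have hsum2 : ((N+1-M : ℕ):ℝ) * c2 ≤ ∑ n ∈ Finset.Icc M N, G.sfun A hAfin.toFinset n x := by
      have hcard : (Finset.Icc M N).card = N + 1 - M := Nat.card_Icc M N
      have := Finset.card_nsmul_le_sum (Finset.Icc M N)
        (fun n => G.sfun A hAfin.toFinset n x) c2
        (fun n hn => by
          simp only [Finset.mem_Icc] at hn
          exact hsL n hn.1 hn.2)
      rw [hcard, nsmul_eq_mul] at this
      exact this
    have hcount : ε * F x R / 2 ≤ ((N+1-M : ℕ):ℝ) := by
      have h1 : ((N+1-M : ℕ):ℝ) = (N:ℝ) + 1 - M := by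
        have : M ≤ N + 1 := by omega
        push_cast [Nat.cast_sub this]
        ring
      rw [h1]
      linarith
    calc min (c2*ε/2) (1/K1) * F x R ≤ (c2*ε/2) * F x R :=
          mul_le_mul_of_nonneg_right (min_le_left _ _) (by linarith)
      _ = c2 * (ε * F x R / 2) := by ring
      _ ≤ c2 * ((N+1-M : ℕ):ℝ) := mul_le_mul_of_nonneg_left hcount hc2.le
      _ = ((N+1-M : ℕ):ℝ) * c2 := by ring
      _ ≤ ∑ n ∈ Finset.Icc M N, G.sfun A hAfin.toFinset n x := hsum2
      _ ≤ ∑ n ∈ Finset.range (N+1), G.sfun A hAfin.toFinset n x := hsum1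
      _ ≤ G.meanE x (R:ℝ) := hE (N+1)
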